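/- Suppose in addition that there are real numbers s and t with t > 0 such that s_i = s and t_i = t for all i ≥ 1. Fix a positive integer n, and for a real number x and e ∈ {0,1,2} set X = (x+s)/(2√t) and F_e(x) := (√t)^{n+e}·U_{n+e}(X) − (s − s_0)·(√t)^{n+e−1}·U_{n+e−1}(X) + (t − t_0)·(√t)^{n+e−2}·U_{n+e−2}(X) (with U_{−1} = 0, which can only occur when n = 1 and e = 0). Then for all real numbers α, β, γ, det(αβγ·m_{i+j} + (αβ+βγ+γα)·m_{i+j+1} + (α+β+γ)·m_{i+j+2} + m_{i+j+3})_{i,j=0}^{n−1} · (β−α)(γ−α)(γ−β) = det( F_j(x_i) )_{i,j=0}^{2} · det(m_{i+j})_{i,j=0}^{n−1}, where (x_0, x_1, x_2) = (α, β, γ) and the 3×3 matrix has (i,j)-entry F_j(x_i). -/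

import Mathlib

/-- `motzkinGF s t n k` is the weighted Motzkin path generating function `m(n,k)`. -/
def motzkinGF (s t : ℕ → ℝ) : ℕ → ℤ → ℝ
  | 0, k => if k = 0 then 1 else 0
  | n+1, k =>
      if k < 0 then 0
      else motzkinGF s t n (k-1) + s k.toNat * motzkinGF s t n k
             + t k.toNat * motzkinGF s t n (k+1)

/-- The Chebyshev polynomial of the second kind, evaluated at a real argument
(`ℤ`-indexed; in particular `chebU (-1) x = 0`). -/
noncomputable def chebU (k : ℤ) (x : ℝ) : ℝ := (Polynomial.Chebyshev.U ℝ k).eval x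

/-- `F_e(x) = (√t)^{n+e} U_{n+e}(X) - (s-s₀)(√t)^{n+e-1} U_{n+e-1}(X)
  + (t-t₀)(√t)^{n+e-2} U_{n+e-2}(X)` with `X = (x+s)/(2√t)`. -/
noncomputable def Fcheb (s₀ t₀ sc tc : ℝ) (n : ℕ) (e : ℕ) (x : ℝ) : ℝ :=
  Real.sqrt tc ^ ((n : ℤ) + e) * chebU ((n : ℤ) + e) ((x + sc) / (2 * Real.sqrt tc))
    - (sc - s₀) * Real.sqrt tc ^ ((n : ℤ) + e - 1)
        * chebU ((n : ℤ) + e - 1) ((x + sc) / (2 * Real.sqrt tc))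
    + (tc - t₀) * Real.sqrt tc ^ ((n : ℤ) + e - 2)
        * chebU ((n : ℤ) + e - 2) ((x + sc) / (2 * Real.sqrt tc))

namespace CHaux

open Polynomial Finset Matrix

variable (s t : ℕ → ℝ)

lemma mz_neg (n : ℕ) {k : ℤ} (hk : k < 0) : motzkinGF s t n k = 0 := by
  cases n with
  | zero => simp only [motzkinGF]; rw [if_neg (by omega)]
  | succ n => simp only [motzkinGF]; rw [if_pos hk]

lemma mz_rec (n : ℕ) (k : ℕ) :
    motzkinGF s t (n+1) (k : ℤ) =
      motzkinGF s t n ((k : ℤ) - 1) + s k * motzkinGF s t n (k : ℤ)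
        + t k * motzkinGF s t n ((k : ℤ) + 1) := by
  simp only [motzkinGF]
  rw [if_neg (by omega)]
  simp

lemma mz_high : ∀ (n k : ℕ), n < k → motzkinGF s t n (k : ℤ) = 0 := by
  intro n
  induction n with
  | zero => intro k hk; simp only [motzkinGF]; rw [if_neg (by omega)]
  | succ n ih =>
    intro k hk
    rw [mz_rec]
    have h1 : ((k : ℤ) - 1) = ((k - 1 : ℕ) : ℤ) := by omega
    have h2 : ((k : ℤ) + 1) = ((k + 1 : ℕ) : ℤ) := by omega
    rw [h1, h2, ih (k-1) (by omega), ih k (by omega), ih (k+1) (by omega)]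
    ring

lemma mz_diag : ∀ n : ℕ, motzkinGF s t n (n : ℤ) = 1 := by
  intro n
  induction n with
  | zero => simp [motzkinGF]
  | succ n ih =>
    rw [mz_rec]
    have h1 : ((n + 1 : ℕ) : ℤ) - 1 = (n : ℤ) := by omega
    have h2 : ((n + 1 : ℕ) : ℤ) + 1 = ((n + 2 : ℕ) : ℤ) := by omega
    rw [h1, h2, ih, mz_high s t n (n+1) (by omega), mz_high s t n (n+2) (by omega)]
    ring

noncomputable def op : ℕ → Polynomial ℝ
  | 0 => 1
  | 1 => X - C (s 0)
  | (k+2) => (X - C (s (k+1))) * op (k+1) - C (t k) * op k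

lemma op_monic (k : ℕ) : (op s t k).Monic ∧ (op s t k).natDegree = k := by
  induction k using Nat.twoStepInduction with
  | zero => exact ⟨monic_one, natDegree_one⟩
  | one => exact ⟨monic_X_sub_C _, natDegree_X_sub_C _⟩
  | more k ih ih1 =>
    have hp : ((X - C (s (k+1))) * op s t (k+1)).Monic := (monic_X_sub_C _).mul ih1.1
    have hdeg : ((X - C (s (k+1))) * op s t (k+1)).natDegree = k + 2 := by
      rw [(monic_X_sub_C _).natDegree_mul ih1.1, natDegree_X_sub_C, ih1.2]
      omega
    have hqd : (C (t k) * op s t k).natDegree < ((X - C (s (k+1))) * op s t (k+1)).natDegree := by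
      rw [hdeg]
      exact lt_of_le_of_lt ((natDegree_C_mul_le _ _).trans ih.2.le) (by omega)
    constructor
    · show ((X - C (s (k+1))) * op s t (k+1) - C (t k) * op s t k).Monic
      exact hp.sub_of_left (degree_lt_degree hqd)
    · show ((X - C (s (k+1))) * op s t (k+1) - C (t k) * op s t k).natDegree = k + 2
      rw [natDegree_sub_eq_left_of_natDegree_lt hqd, hdeg]

lemma op_coeff_hi {k j : ℕ} (h : k < j) : (op s t k).coeff j = 0 :=
  coeff_eq_zero_of_natDegree_lt (by rw [(op_monic s t k).2]; exact h)

lemma op_coeff_diag (k : ℕ) : (op s t k).coeff k = 1 := by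
  have h := (op_monic s t k).1.coeff_natDegree
  rwa [(op_monic s t k).2] at h

noncomputable def Tt (k : ℕ) : ℝ := ∏ j ∈ Finset.range k, t j

lemma shift_sum (p : Polynomial ℝ) (N : ℕ) (hp : p.coeff N = 0) (g : ℕ → ℝ) :
    ∑ j ∈ range (N+1), (X * p).coeff j * g j = ∑ j ∈ range (N+1), p.coeff j * g (j+1) := by
  have h1 : ∑ j ∈ range (N+1), (X * p).coeff j * g j
      = (∑ j ∈ range N, (X * p).coeff (j+1) * g (j+1)) + (X * p).coeff 0 * g 0 :=
    Finset.sum_range_succ' _ N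
  have h2 : ∑ j ∈ range (N+1), p.coeff j * g (j+1)
      = (∑ j ∈ range N, p.coeff j * g (j+1)) + p.coeff N * g (N+1) :=
    Finset.sum_range_succ _ N
  rw [h1, h2, hp]
  simp [coeff_X_mul, mul_coeff_zero, coeff_X_zero]

lemma keyA (N : ℕ) (k : ℕ) : k ≤ N → ∀ i : ℕ,
    ∑ j ∈ range (N+1), (op s t k).coeff j * motzkinGF s t (i+j) 0
      = Tt t k * motzkinGF s t i (k : ℤ) := by
  induction k using Nat.twoStepInduction with
  | zero =>
    intro _ i
    have : op s t 0 = 1 := rfl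
    rw [this]
    rw [Finset.sum_eq_single 0]
    · simp [Tt]
    · intro b _ hb; simp [coeff_one, hb]
    · intro h; exact absurd (Finset.mem_range.mpr (by omega)) h
  | one =>
    intro h1 i
    have hs : ∑ j ∈ range (N+1), (op s t 1).coeff j * motzkinGF s t (i+j) 0
        = motzkinGF s t (i+1) 0 - s 0 * motzkinGF s t i 0 := by
      have hop : op s t 1 = X - C (s 0) := rfl
      rw [hop]
      simp only [coeff_sub, sub_mul, Finset.sum_sub_distrib]
      congr 1
      · rw [Finset.sum_eq_single 1]
        · simp
        · intro b _ hb; rw [coeff_X, if_neg (by omega)]; ring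
        · intro h; exact absurd (Finset.mem_range.mpr (by omega)) h
      · rw [Finset.sum_eq_single 0]
        · simp
        · intro b _ hb; rw [coeff_C, if_neg (by omega)]; ring
        · intro h; exact absurd (Finset.mem_range.mpr (by omega)) h
    rw [hs]
    have hrec := mz_rec s t i 0
    push_cast at hrec
    rw [mz_neg s t i (by norm_num : (-1 : ℤ) < 0)] at hrec
    have hT : Tt t 1 = t 0 := by simp [Tt]
    rw [hT]
    push_cast
    linarith [hrec]
  | more k ih ih1 =>
    intro h i
    have hop : op s t (k+2) = X * op s t (k+1) - C (s (k+1)) * op s t (k+1) - C (t k) * op s t k := by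
      show (X - C (s (k+1))) * op s t (k+1) - C (t k) * op s t k = _
      ring
    rw [hop]
    simp only [coeff_sub, coeff_C_mul, sub_mul, Finset.sum_sub_distrib, mul_assoc]
    rw [← Finset.mul_sum, ← Finset.mul_sum]
    rw [ih1 (by omega) i, ih (by omega) i]
    have hsh : ∑ j ∈ range (N+1), (X * op s t (k+1)).coeff j * motzkinGF s t (i+j) 0
        = Tt t (k+1) * motzkinGF s t (i+1) ((k+1 : ℕ) : ℤ) := by
      rw [shift_sum _ _ (op_coeff_hi s t (by omega : k + 1 < N))]
      have : ∀ j : ℕ, i + (j+1) = (i+1) + j := by omega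
      calc ∑ j ∈ range (N+1), (op s t (k+1)).coeff j * motzkinGF s t (i+(j+1)) 0
          = ∑ j ∈ range (N+1), (op s t (k+1)).coeff j * motzkinGF s t ((i+1)+j) 0 := by
            apply Finset.sum_congr rfl; intro j _; rw [this j]
        _ = Tt t (k+1) * motzkinGF s t (i+1) ((k+1 : ℕ) : ℤ) := ih1 (by omega) (i+1)
    rw [hsh]
    have hrec := mz_rec s t i (k+1)
    have e1 : ((k+1 : ℕ) : ℤ) - 1 = ((k : ℕ) : ℤ) := by omega
    have e2 : ((k+1 : ℕ) : ℤ) + 1 = ((k+2 : ℕ) : ℤ) := by omega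
    rw [e1, e2] at hrec
    have eT1 : Tt t (k+1) = Tt t k * t k := by rw [Tt, Finset.prod_range_succ]; rfl
    have eT2 : Tt t (k+2) = Tt t (k+1) * t (k+1) := by rw [Tt, Finset.prod_range_succ]; rfl
    rw [hrec, eT2, eT1]
    ring

lemma detH (N : ℕ) :
    (Matrix.of fun i j : Fin N => motzkinGF s t ((i:ℕ)+(j:ℕ)) 0).det
      = ∏ k ∈ range N, Tt t k := by
  cases N with
  | zero => simp [Matrix.det_fin_zero]
  | succ M =>
    set H : Matrix (Fin (M+1)) (Fin (M+1)) ℝ :=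
      Matrix.of fun i j : Fin (M+1) => motzkinGF s t ((i:ℕ)+(j:ℕ)) 0 with hH
    set A : Matrix (Fin (M+1)) (Fin (M+1)) ℝ :=
      Matrix.of fun i k : Fin (M+1) => motzkinGF s t (i:ℕ) ((k:ℕ) : ℤ) with hA
    set K : Matrix (Fin (M+1)) (Fin (M+1)) ℝ :=
      Matrix.of fun j k : Fin (M+1) => (op s t (k:ℕ)).coeff (j:ℕ) with hK
    have hHK : H * K = A * Matrix.diagonal (fun k : Fin (M+1) => Tt t (k:ℕ)) := by
      ext i k
      rw [Matrix.mul_apply, Matrix.mul_diagonal]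
      have : ∀ j : Fin (M+1), H i j * K j k
          = (op s t (k:ℕ)).coeff (j:ℕ) * motzkinGF s t ((i:ℕ)+(j:ℕ)) 0 := by
        intro j; simp only [hH, hK, Matrix.of_apply]; ring
      rw [Finset.sum_congr rfl (fun j _ => this j)]
      rw [Fin.sum_univ_eq_sum_range (fun j => (op s t (k:ℕ)).coeff j * motzkinGF s t ((i:ℕ)+j) 0) (M+1)]
      rw [keyA s t M (k:ℕ) (by omega) (i:ℕ)]
      simp only [hA, Matrix.of_apply]
      ring
    have hdetK : K.det = 1 := by
      rw [Matrix.det_of_upperTriangular (M := K)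
        (fun i j (hij : (j:Fin (M+1)) < i) => op_coeff_hi s t (by exact_mod_cast hij))]
      simp [hK, op_coeff_diag]
    have hdetA : A.det = 1 := by
      rw [Matrix.det_of_lowerTriangular A
        (fun i j (hij : i < j) => mz_high s t (i:ℕ) (j:ℕ) (by exact_mod_cast hij))]
      simp [hA, mz_diag]
    have hdetD : (Matrix.diagonal (fun k : Fin (M+1) => Tt t (k:ℕ))).det
        = ∏ k ∈ range (M+1), Tt t k := by
      rw [Matrix.det_diagonal]
      exact Fin.prod_univ_eq_prod_range (fun k => Tt t k) (M+1)
    calc H.det = H.det * K.det := by rw [hdetK, mul_one]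
      _ = (H * K).det := (Matrix.det_mul H K).symm
      _ = (A * Matrix.diagonal (fun k : Fin (M+1) => Tt t (k:ℕ))).det := by rw [hHK]
      _ = A.det * (Matrix.diagonal (fun k : Fin (M+1) => Tt t (k:ℕ))).det := Matrix.det_mul _ _
      _ = ∏ k ∈ range (M+1), Tt t k := by rw [hdetA, hdetD, one_mul]

variable (sc tc : ℝ)

noncomputable def sig (k : ℤ) (x : ℝ) : ℝ :=
  Real.sqrt tc ^ k * chebU k ((x + sc) / (2 * Real.sqrt tc))

lemma sig_rec (htc : 0 < tc) (k : ℤ) (x : ℝ) :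
    sig sc tc (k+2) x = (x + sc) * sig sc tc (k+1) x - tc * sig sc tc k x := by
  have hsq : Real.sqrt tc ≠ 0 := ne_of_gt (Real.sqrt_pos.mpr htc)
  have h2 : Real.sqrt tc * Real.sqrt tc = tc := Real.mul_self_sqrt htc.le
  have hUe : chebU (k+2) ((x+sc)/(2*Real.sqrt tc))
      = 2 * ((x+sc)/(2*Real.sqrt tc)) * chebU (k+1) ((x+sc)/(2*Real.sqrt tc))
        - chebU k ((x+sc)/(2*Real.sqrt tc)) := by
    unfold chebU
    rw [Polynomial.Chebyshev.U_add_two]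
    simp
  unfold sig
  rw [hUe]
  have e1 : Real.sqrt tc ^ (k+2) = Real.sqrt tc ^ k * tc := by
    rw [zpow_add₀ hsq k 2, zpow_two, h2]
  have e2 : Real.sqrt tc ^ (k+1) = Real.sqrt tc ^ k * Real.sqrt tc := zpow_add_one₀ hsq k
  rw [e1, e2]
  set D := (x + sc) / (2 * Real.sqrt tc) with hD
  have key : 2 * D * Real.sqrt tc = x + sc := by
    rw [hD]
    field_simp
  linear_combination (-(Real.sqrt tc ^ k * chebU (k+1) D * 2 * D)) * h2
    + (Real.sqrt tc ^ k * chebU (k+1) D * Real.sqrt tc) * key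

lemma sig_zero (x : ℝ) : sig sc tc 0 x = 1 := by
  unfold sig chebU
  simp [Polynomial.Chebyshev.U_zero]

lemma sig_neg_one (x : ℝ) : sig sc tc (-1) x = 0 := by
  unfold sig chebU
  simp [Polynomial.Chebyshev.U_neg_one]

lemma sig_one (htc : 0 < tc) (x : ℝ) : sig sc tc 1 x = x + sc := by
  have hsq : Real.sqrt tc ≠ 0 := ne_of_gt (Real.sqrt_pos.mpr htc)
  unfold sig chebU
  rw [Polynomial.Chebyshev.U_one]
  simp only [zpow_one, Polynomial.eval_mul, Polynomial.eval_ofNat, Polynomial.eval_X]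
  field_simp

lemma op_eval (hs : ∀ i, 1 ≤ i → s i = sc) (htt : ∀ i, 1 ≤ i → t i = tc) (htc : 0 < tc) :
    ∀ k : ℕ, 1 ≤ k → ∀ x : ℝ,
      (op s t k).eval (-x)
        = (-1:ℝ)^k * (sig sc tc (k:ℤ) x + (s 0 - sc) * sig sc tc ((k:ℤ)-1) x
            - (t 0 - tc) * sig sc tc ((k:ℤ)-2) x) := by
  intro k
  induction k using Nat.twoStepInduction with
  | zero => intro h; exact absurd h (by norm_num)
  | one =>
    intro _ x
    have hop : op s t 1 = X - C (s 0) := rfl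
    rw [hop]
    simp only [Polynomial.eval_sub, Polynomial.eval_X, Polynomial.eval_C]
    have c1 : ((1:ℕ):ℤ) = 1 := by norm_num
    rw [c1]
    have e0 : (1:ℤ) - 1 = 0 := by norm_num
    have em : (1:ℤ) - 2 = -1 := by norm_num
    rw [e0, em, sig_one sc tc htc, sig_zero, sig_neg_one]
    ring
  | more k ih ih1 =>
    intro _ x
    rcases Nat.eq_zero_or_pos k with rfl | hk
    · have hop : op s t (0+2) = (X - C (s 1)) * (X - C (s 0)) - C (t 0) * 1 := rfl
      rw [hop, hs 1 le_rfl]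
      simp only [Polynomial.eval_sub, Polynomial.eval_mul, Polynomial.eval_X,
        Polynomial.eval_C, Polynomial.eval_one]
      have r0 : sig sc tc 2 x = (x + sc) * sig sc tc 1 x - tc * sig sc tc 0 x := by
        have h := sig_rec sc tc htc 0 x
        norm_num at h
        exact h
      have c2 : ((0+2:ℕ):ℤ) = 2 := by norm_num
      rw [c2]
      have e1 : (2:ℤ) - 1 = 1 := by norm_num
      have e2 : (2:ℤ) - 2 = 0 := by norm_num
      rw [e1, e2, r0, sig_one sc tc htc, sig_zero]
      ring
    · have hop : op s t (k+2) = (X - C (s (k+1))) * op s t (k+1) - C (t k) * op s t k := rfl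
      rw [hop]
      simp only [Polynomial.eval_sub, Polynomial.eval_mul, Polynomial.eval_X, Polynomial.eval_C]
      rw [ih1 (by omega) x, ih (by omega) x, hs (k+1) (by omega), htt k hk]
      push_cast
      have r1 : sig sc tc ((k:ℤ)+2) x = (x+sc) * sig sc tc ((k:ℤ)+1) x - tc * sig sc tc (k:ℤ) x :=
        sig_rec sc tc htc (k:ℤ) x
      have r2 : sig sc tc ((k:ℤ)+1) x
          = (x+sc) * sig sc tc (k:ℤ) x - tc * sig sc tc ((k:ℤ)-1) x := by
        have h := sig_rec sc tc htc ((k:ℤ)-1) x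
        have e : (k:ℤ)-1+2 = (k:ℤ)+1 := by ring
        have e2 : (k:ℤ)-1+1 = (k:ℤ) := by ring
        rw [e, e2] at h
        exact h
      have r3 : sig sc tc (k:ℤ) x
          = (x+sc) * sig sc tc ((k:ℤ)-1) x - tc * sig sc tc ((k:ℤ)-2) x := by
        have h := sig_rec sc tc htc ((k:ℤ)-2) x
        have e : (k:ℤ)-2+2 = (k:ℤ) := by ring
        have e2 : (k:ℤ)-2+1 = (k:ℤ)-1 := by ring
        rw [e, e2] at h
        exact h
      rw [show (k:ℤ)+2-1 = (k:ℤ)+1 from by ring, show (k:ℤ)+2-2 = (k:ℤ) from by ring,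
        show (k:ℤ)+1-1 = (k:ℤ) from by ring, show (k:ℤ)+1-2 = (k:ℤ)-1 from by ring,
        r1, r2, r3]
      ring

lemma fcheb_eq (s₀ t₀ : ℝ) (n e : ℕ) (x : ℝ) :
    Fcheb s₀ t₀ sc tc n e x
      = sig sc tc ((n:ℤ)+e) x + (s₀ - sc) * sig sc tc ((n:ℤ)+e-1) x
          - (t₀ - tc) * sig sc tc ((n:ℤ)+e-2) x := by
  unfold Fcheb sig
  ring

lemma op_eval_F (hs : ∀ i, 1 ≤ i → s i = sc) (htt : ∀ i, 1 ≤ i → t i = tc) (htc : 0 < tc)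
    (n e : ℕ) (hn : 0 < n) (x : ℝ) :
    (op s t (n+e)).eval (-x) = (-1:ℝ)^(n+e) * Fcheb (s 0) (t 0) sc tc n e x := by
  rw [op_eval s t sc tc hs htt htc (n+e) (by omega) x, fcheb_eq sc tc (s 0) (t 0) n e x]
  push_cast
  ring

section Main

variable (n : ℕ)

def ind : Fin n ⊕ Fin 3 → ℕ := Sum.elim (fun j => (j:ℕ)) (fun e => n + (e:ℕ))

def dgm : Fin n ⊕ Fin 3 → ℕ := Sum.elim (fun j => (j:ℕ) + 3) (fun a => (a:ℕ))

def eI : (Fin n ⊕ Fin 3) ≃ Fin (n+3) := finSumFinEquiv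

def eD : (Fin n ⊕ Fin 3) ≃ Fin (n+3) :=
  (Equiv.sumComm (Fin n) (Fin 3)).trans (finSumFinEquiv.trans (finCongr (by omega)))

lemma eI_val (d : Fin n ⊕ Fin 3) : ((eI n d : Fin (n+3)) : ℕ) = ind n d := by
  cases d with
  | inl j => simp [eI, ind]
  | inr e => simp [eI, ind]

lemma eD_val (d : Fin n ⊕ Fin 3) : ((eD n d : Fin (n+3)) : ℕ) = dgm n d := by
  cases d with
  | inl j => simp [eD, dgm]; try omega
  | inr e => simp [eD, dgm]

lemma sum_ind (f : ℕ → ℝ) :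
    ∑ d : Fin n ⊕ Fin 3, f (ind n d) = ∑ r ∈ range (n+3), f r := by
  rw [Fintype.sum_sum_type]
  simp only [ind, Sum.elim_inl, Sum.elim_inr]
  rw [Finset.sum_range_add f n 3,
    ← Fin.sum_univ_eq_sum_range (fun j => f j) n,
    ← Fin.sum_univ_eq_sum_range (fun e => f (n + e)) 3]

lemma sum_dg (f : ℕ → ℝ) :
    ∑ d : Fin n ⊕ Fin 3, f (dgm n d) = ∑ r ∈ range (n+3), f r := by
  rw [Fintype.sum_sum_type]
  simp only [dgm, Sum.elim_inl, Sum.elim_inr]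
  rw [show n+3 = 3+n from by omega, Finset.sum_range_add f 3 n,
    add_comm (∑ x ∈ range 3, f x),
    ← Fin.sum_univ_eq_sum_range (fun j => f (3+j)) n,
    ← Fin.sum_univ_eq_sum_range (fun a => f a) 3]
  congr 1
  exact Finset.sum_congr rfl (fun j _ => by rw [show (j:ℕ)+3 = 3+(j:ℕ) from by omega])

variable (α β γ : ℝ)

noncomputable def wpol : Polynomial ℝ := (X + C α) * (X + C β) * (X + C γ)

lemma wpol_monic : (wpol α β γ).Monic :=
  ((monic_X_add_C α).mul (monic_X_add_C β)).mul (monic_X_add_C γ)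

lemma wpol_natDegree : (wpol α β γ).natDegree = 3 := by
  rw [wpol, ((monic_X_add_C α).mul (monic_X_add_C β)).natDegree_mul (monic_X_add_C γ),
    (monic_X_add_C α).natDegree_mul (monic_X_add_C β), natDegree_X_add_C, natDegree_X_add_C,
    natDegree_X_add_C]

lemma wpol_expand : wpol α β γ
    = X^3 + C (α+β+γ) * X^2 + C (α*β+β*γ+γ*α) * X + C (α*β*γ) := by
  simp only [wpol, C_add, C_mul]
  ring

lemma wpol_root (l : Fin 3) : (wpol α β γ).eval (-(![α,β,γ] l)) = 0 := by
  fin_cases l <;> simp [wpol]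

lemma sum_coeff_X (N m : ℕ) (hm : m < N) (g : ℕ → ℝ) :
    ∑ r ∈ range N, ((X:Polynomial ℝ)^m).coeff r * g r = g m := by
  rw [Finset.sum_eq_single m]
  · rw [coeff_X_pow, if_pos rfl, one_mul]
  · intro b _ hb; rw [coeff_X_pow, if_neg hb, zero_mul]
  · intro h; exact absurd (Finset.mem_range.mpr hm) h

lemma sum_coeff_CX (N m : ℕ) (hm : m < N) (c : ℝ) (g : ℕ → ℝ) :
    ∑ r ∈ range N, (C c * (X:Polynomial ℝ)^m).coeff r * g r = c * g m := by
  rw [Finset.sum_eq_single m]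
  · rw [coeff_C_mul, coeff_X_pow, if_pos rfl, mul_one]
  · intro b _ hb; rw [coeff_C_mul, coeff_X_pow, if_neg hb, mul_zero, zero_mul]
  · intro h; exact absurd (Finset.mem_range.mpr hm) h

lemma sum_wX (N i j : ℕ) (hj : j + 3 < N) :
    ∑ r ∈ range N, (wpol α β γ * X^j).coeff r * motzkinGF s t (i + r) 0
      = α*β*γ * motzkinGF s t (i+j) 0 + (α*β+β*γ+γ*α) * motzkinGF s t (i+j+1) 0
        + (α+β+γ) * motzkinGF s t (i+j+2) 0 + motzkinGF s t (i+j+3) 0 := by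
  have hw : wpol α β γ * X^j
      = (X:Polynomial ℝ)^(j+3) + C (α+β+γ) * X^(j+2) + C (α*β+β*γ+γ*α) * X^(j+1)
          + C (α*β*γ) * X^j := by
    rw [wpol_expand]; ring
  rw [hw]
  simp only [coeff_add, add_mul, Finset.sum_add_distrib]
  rw [sum_coeff_X N (j+3) (by omega), sum_coeff_CX N (j+2) (by omega),
    sum_coeff_CX N (j+1) (by omega), sum_coeff_CX N j (by omega)]
  rw [show i+(j+3) = i+j+3 from by omega, show i+(j+2) = i+j+2 from by omega,
    show i+(j+1) = i+j+1 from by omega]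
  ring

noncomputable def qpol : Fin n ⊕ Fin 3 → Polynomial ℝ :=
  Sum.elim (fun j => wpol α β γ * X^(j:ℕ)) (fun e => op s t (n + (e:ℕ)))

lemma qpol_natDegree (c : Fin n ⊕ Fin 3) : (qpol s t n α β γ c).natDegree < n + 3 := by
  cases c with
  | inl j =>
    have : (wpol α β γ * X^(j:ℕ)).natDegree = 3 + (j:ℕ) := by
      rw [(wpol_monic α β γ).natDegree_mul (monic_X_pow _), wpol_natDegree, natDegree_X_pow]
    show (wpol α β γ * X^(j:ℕ)).natDegree < n + 3
    rw [this]
    have := j.isLt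
    omega
  | inr e =>
    show (op s t (n + (e:ℕ))).natDegree < n + 3
    rw [(op_monic s t _).2]
    have := e.isLt
    omega

lemma eval_split (p : Polynomial ℝ) (hp : p.natDegree < n+3) (y : ℝ) :
    (∑ j : Fin n, y^((j:ℕ)+3) * p.coeff ((j:ℕ)+3)) + (∑ a : Fin 3, y^(a:ℕ) * p.coeff (a:ℕ))
      = p.eval y := by
  have h := sum_dg n (fun m => y^m * p.coeff m)
  rw [Fintype.sum_sum_type] at h
  simp only [dgm, Sum.elim_inl, Sum.elim_inr] at h
  rw [h, eval_eq_sum_range' hp y]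
  exact Finset.sum_congr rfl (fun r _ => mul_comm _ _)

noncomputable def Wdg : Matrix (Fin n ⊕ Fin 3) (Fin n ⊕ Fin 3) ℝ :=
  Matrix.of fun d c => (qpol s t n α β γ c).coeff (dgm n d)

noncomputable def Wind : Matrix (Fin n ⊕ Fin 3) (Fin n ⊕ Fin 3) ℝ :=
  Matrix.of fun d c => (qpol s t n α β γ c).coeff (ind n d)

noncomputable def HHm : Matrix (Fin n ⊕ Fin 3) (Fin n ⊕ Fin 3) ℝ :=
  Matrix.of fun i j => motzkinGF s t (ind n i + ind n j) 0

noncomputable def Qmat : Matrix (Fin 3) (Fin 3) ℝ :=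
  Matrix.of fun e' e : Fin 3 =>
    Tt t (n + (e:ℕ)) * motzkinGF s t (n + (e':ℕ)) ((n + (e:ℕ) : ℕ) : ℤ)

lemma HH_det : (HHm s t n).det = (∏ k ∈ range n, Tt t k) * ∏ e ∈ range 3, Tt t (n+e) := by
  have h1 : HHm s t n
      = (Matrix.of fun i j : Fin (n+3) => motzkinGF s t ((i:ℕ)+(j:ℕ)) 0).submatrix (eI n) (eI n) := by
    ext d d'
    simp only [HHm, Matrix.submatrix_apply, Matrix.of_apply, eI_val]
  rw [h1, Matrix.det_submatrix_equiv_self, detH s t (n+3),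
    Finset.prod_range_add (fun k => Tt t k) n 3]

lemma mul_entry (i c : Fin n ⊕ Fin 3) : (HHm s t n * Wind s t n α β γ) i c
    = ∑ r ∈ range (n+3), (qpol s t n α β γ c).coeff r * motzkinGF s t (ind n i + r) 0 := by
  rw [Matrix.mul_apply,
    ← sum_ind n (fun r => (qpol s t n α β γ c).coeff r * motzkinGF s t (ind n i + r) 0)]
  exact Finset.sum_congr rfl (fun d _ => by simp only [HHm, Wind, Matrix.of_apply]; ring)

lemma key_entry (i : ℕ) (e : Fin 3) :
    ∑ r ∈ range (n+3), (op s t (n+(e:ℕ))).coeff r * motzkinGF s t (i + r) 0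
      = Tt t (n+(e:ℕ)) * motzkinGF s t i ((n+(e:ℕ) : ℕ) : ℤ) :=
  keyA s t (n+2) (n+(e:ℕ)) (by omega) i

lemma HHW_blocks :
    HHm s t n * Wind s t n α β γ
      = Matrix.fromBlocks
          (Matrix.of fun i j : Fin n =>
            α * β * γ * motzkinGF s t ((i:ℕ)+(j:ℕ)) 0
              + (α*β + β*γ + γ*α) * motzkinGF s t ((i:ℕ)+(j:ℕ)+1) 0
              + (α+β+γ) * motzkinGF s t ((i:ℕ)+(j:ℕ)+2) 0
              + motzkinGF s t ((i:ℕ)+(j:ℕ)+3) 0)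
          0
          (Matrix.of fun (e' : Fin 3) (j : Fin n) =>
            (HHm s t n * Wind s t n α β γ) (Sum.inr e') (Sum.inl j))
          (Qmat s t n) := by
  ext i c
  cases i with
  | inl i =>
    cases c with
    | inl j =>
      rw [mul_entry, Matrix.fromBlocks_apply₁₁]
      have hq : qpol s t n α β γ (Sum.inl j) = wpol α β γ * X^(j:ℕ) := rfl
      have hind : ind n (Sum.inl i) = (i:ℕ) := rfl
      rw [hq, hind, sum_wX s t α β γ (n+3) (i:ℕ) (j:ℕ) (by have := j.isLt; omega)]
      simp only [Matrix.of_apply]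
    | inr e =>
      rw [mul_entry, Matrix.fromBlocks_apply₁₂]
      have hq : qpol s t n α β γ (Sum.inr e) = op s t (n+(e:ℕ)) := rfl
      rw [hq]
      have hind : ind n (Sum.inl i) = (i:ℕ) := rfl
      rw [hind, key_entry s t n (i:ℕ) e,
        mz_high s t (i:ℕ) (n+(e:ℕ)) (by have := i.isLt; omega), mul_zero]
      simp
  | inr e' =>
    cases c with
    | inl j =>
      rw [Matrix.fromBlocks_apply₂₁]
      simp only [Matrix.of_apply]
    | inr e =>
      rw [mul_entry, Matrix.fromBlocks_apply₂₂]
      have hq : qpol s t n α β γ (Sum.inr e) = op s t (n+(e:ℕ)) := rfl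
      have hind : ind n (Sum.inr e') = n + (e':ℕ) := rfl
      rw [hq, hind, key_entry s t n (n+(e':ℕ)) e]
      simp only [Qmat, Matrix.of_apply]

lemma Qmat_det : (Qmat s t n).det = ∏ e ∈ range 3, Tt t (n+e) := by
  have htri : (Qmat s t n).BlockTriangular OrderDual.toDual := by
    intro e' e h
    have he : (e':ℕ) < (e:ℕ) := h
    show Tt t (n + (e:ℕ)) * motzkinGF s t (n + (e':ℕ)) ((n + (e:ℕ) : ℕ) : ℤ) = 0
    rw [mz_high s t (n + (e':ℕ)) (n + (e:ℕ)) (by omega), mul_zero]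
  rw [Matrix.det_of_lowerTriangular (Qmat s t n) htri]
  calc ∏ e : Fin 3, Qmat s t n e e
      = ∏ e : Fin 3, Tt t (n+(e:ℕ)) := by
        refine Finset.prod_congr rfl (fun e _ => ?_)
        show Tt t (n + (e:ℕ)) * motzkinGF s t (n + (e:ℕ)) ((n + (e:ℕ) : ℕ) : ℤ) = _
        rw [mz_diag s t (n+(e:ℕ)), mul_one]
    _ = ∏ e ∈ range 3, Tt t (n+e) := Fin.prod_univ_eq_prod_range (fun k => Tt t (n+k)) 3

def tau : Equiv.Perm (Fin n ⊕ Fin 3) := (eI n).trans (eD n).symm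

lemma dg_tau (d : Fin n ⊕ Fin 3) : dgm n (tau n d) = ind n d := by
  rw [← eD_val, ← eI_val]
  show ((eD n) ((eD n).symm (eI n d)) : ℕ) = _
  rw [Equiv.apply_symm_apply]

lemma Wind_eq : Wind s t n α β γ = (Wdg s t n α β γ).submatrix (tau n) id := by
  ext d c
  simp only [Wind, Wdg, Matrix.submatrix_apply, Matrix.of_apply, dg_tau, id]

lemma tau_sign (hn : 0 < n) : Equiv.Perm.sign (tau n) = (-1)^n := by
  have hπ : tau n = Equiv.permCongr (eI n).symm ((eD n).symm.trans (eI n)) := by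
    ext d
    simp [tau, Equiv.permCongr_apply]
  rw [hπ, Equiv.Perm.sign_permCongr]
  have key : ∀ d : Fin n ⊕ Fin 3, ((finRotate (n+3))^3) (eI n d) = eD n d := by
    intro d
    have h1 : ((finRotate (n+3))^3) (eI n d) = eI n d + 1 + 1 + 1 := by
      simp [pow_succ, Equiv.Perm.mul_apply]
    have h2 : eI n d + 1 + 1 + 1 = eI n d + 3 := by open Fin.CommRing in ring
    rw [h1, h2]
    apply Fin.ext
    rw [Fin.val_add, eI_val, eD_val]
    have h3 : ((3 : Fin (n+3)) : ℕ) = 3 := by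
      rw [show ((3 : Fin (n+3)) : ℕ) = 3 % (n+3) from rfl]
      exact Nat.mod_eq_of_lt (show 3 < n+3 by omega)
    rw [h3]
    cases d with
    | inl j =>
      show ((j:ℕ) + 3) % (n+3) = (j:ℕ) + 3
      exact Nat.mod_eq_of_lt (show (j:ℕ)+3 < n+3 by have := j.isLt; omega)
    | inr a =>
      show (n + (a:ℕ) + 3) % (n+3) = (a:ℕ)
      rw [show n + (a:ℕ) + 3 = (a:ℕ) + (n+3) from by omega, Nat.add_mod_right]
      exact Nat.mod_eq_of_lt (show (a:ℕ) < n+3 by have := a.isLt; omega)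
  have hrot : ((eD n).symm.trans (eI n))⁻¹ = (finRotate (n+3))^3 := by
    ext r
    have hh : ((eD n).symm.trans (eI n))⁻¹ r = eD n ((eI n).symm r) := by
      simp [Equiv.Perm.inv_def, Equiv.symm_trans_apply]
    rw [hh, ← key ((eI n).symm r), Equiv.apply_symm_apply]
  rw [← Equiv.Perm.sign_inv, hrot, map_pow, sign_finRotate, ← pow_mul,
    show (n+3-1)*3 = n + 2*(n+3) from by omega, pow_add, pow_mul]
  norm_num

noncomputable def Pmat : Matrix (Fin 3) (Fin 3) ℝ :=
  Matrix.of fun l e : Fin 3 => (op s t (n+(e:ℕ))).eval (-(![α,β,γ] l))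

lemma detWdg : (-((β-α)*(γ-α)*(γ-β))) * (Wdg s t n α β γ).det = (Pmat s t n α β γ).det := by
  set Bm : Matrix (Fin 3) (Fin n) ℝ :=
    Matrix.of (fun (l : Fin 3) (j : Fin n) => (-(![α,β,γ] l))^((j:ℕ)+3)) with hBm
  set V3 : Matrix (Fin 3) (Fin 3) ℝ :=
    Matrix.of (fun (l a : Fin 3) => (-(![α,β,γ] l))^(a:ℕ)) with hV3
  set W11 : Matrix (Fin n) (Fin n) ℝ :=
    Matrix.of (fun (j j' : Fin n) => (wpol α β γ * X^(j':ℕ)).coeff ((j:ℕ)+3)) with hW11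
  set W12 : Matrix (Fin n) (Fin 3) ℝ :=
    Matrix.of (fun (j : Fin n) (e : Fin 3) => (op s t (n+(e:ℕ))).coeff ((j:ℕ)+3)) with hW12
  set W21 : Matrix (Fin 3) (Fin n) ℝ :=
    Matrix.of (fun (a : Fin 3) (j' : Fin n) => (wpol α β γ * X^(j':ℕ)).coeff (a:ℕ)) with hW21
  set W22 : Matrix (Fin 3) (Fin 3) ℝ :=
    Matrix.of (fun (a e : Fin 3) => (op s t (n+(e:ℕ))).coeff (a:ℕ)) with hW22
  have hWb : Wdg s t n α β γ = Matrix.fromBlocks W11 W12 W21 W22 := by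
    ext d c
    cases d <;> cases c <;> rfl
  have hb21 : Bm * W11 + V3 * W21 = 0 := by
    ext l j'
    simp only [Matrix.add_apply, Matrix.mul_apply, Matrix.zero_apply, hBm, hV3, hW11, hW21,
      Matrix.of_apply]
    rw [eval_split n (wpol α β γ * X^(j':ℕ)) (qpol_natDegree s t n α β γ (Sum.inl j'))
      (-(![α,β,γ] l))]
    rw [eval_mul, wpol_root, zero_mul]
  have hb22 : Bm * W12 + V3 * W22 = Pmat s t n α β γ := by
    ext l e
    simp only [Matrix.add_apply, Matrix.mul_apply, hBm, hV3, hW12, hW22, Matrix.of_apply]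
    rw [eval_split n (op s t (n+(e:ℕ))) (qpol_natDegree s t n α β γ (Sum.inr e))
      (-(![α,β,γ] l))]
    rfl
  have hEW : Matrix.fromBlocks 1 0 Bm V3 * Wdg s t n α β γ
      = Matrix.fromBlocks W11 W12 0 (Pmat s t n α β γ) := by
    rw [hWb, Matrix.fromBlocks_multiply]
    rw [Matrix.one_mul, Matrix.one_mul, Matrix.zero_mul, Matrix.zero_mul, add_zero, add_zero,
      hb21, hb22]
  have hW11det : W11.det = 1 := by
    have htri : W11.BlockTriangular id := by
      intro j j' h
      have hlt : (j':ℕ) < (j:ℕ) := h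
      simp only [hW11, Matrix.of_apply]
      apply coeff_eq_zero_of_natDegree_lt
      rw [(wpol_monic α β γ).natDegree_mul (monic_X_pow _), wpol_natDegree, natDegree_X_pow]
      omega
    rw [Matrix.det_of_upperTriangular htri]
    refine Finset.prod_eq_one (fun j _ => ?_)
    simp only [hW11, Matrix.of_apply]
    have hd : (wpol α β γ * X^(j:ℕ)).natDegree = 3+(j:ℕ) := by
      rw [(wpol_monic α β γ).natDegree_mul (monic_X_pow _), wpol_natDegree, natDegree_X_pow]
    rw [show (j:ℕ)+3 = 3+(j:ℕ) from by omega, ← hd]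
    exact ((wpol_monic α β γ).mul (monic_X_pow _)).coeff_natDegree
  have hEdet : (Matrix.fromBlocks 1 0 Bm V3 : Matrix (Fin n ⊕ Fin 3) (Fin n ⊕ Fin 3) ℝ).det
      = -((β-α)*(γ-α)*(γ-β)) := by
    rw [Matrix.det_fromBlocks_zero₁₂, Matrix.det_one, one_mul, Matrix.det_fin_three]
    simp [hV3]
    ring
  calc (-((β-α)*(γ-α)*(γ-β))) * (Wdg s t n α β γ).det
      = (Matrix.fromBlocks 1 0 Bm V3 : Matrix (Fin n ⊕ Fin 3) (Fin n ⊕ Fin 3) ℝ).det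
          * (Wdg s t n α β γ).det := by rw [hEdet]
    _ = (Matrix.fromBlocks 1 0 Bm V3 * Wdg s t n α β γ).det := (Matrix.det_mul _ _).symm
    _ = (Matrix.fromBlocks W11 W12 0 (Pmat s t n α β γ)).det := by rw [hEW]
    _ = W11.det * (Pmat s t n α β γ).det := Matrix.det_fromBlocks_zero₂₁ _ _ _
    _ = (Pmat s t n α β γ).det := by rw [hW11det, one_mul]

lemma Pmat_det (hs : ∀ i, 1 ≤ i → s i = sc) (htt : ∀ i, 1 ≤ i → t i = tc) (htc : 0 < tc)
    (hn : 0 < n) :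
    (Pmat s t n α β γ).det
      = (-1:ℝ)^(3*n+3)
          * (Matrix.of fun i j : Fin 3 => Fcheb (s 0) (t 0) sc tc n (j:ℕ) (![α,β,γ] i)).det := by
  have hP : Pmat s t n α β γ
      = Matrix.of (fun l e : Fin 3 => ((-1:ℝ)^(n+(e:ℕ)))
          * (Matrix.of fun i j : Fin 3 => Fcheb (s 0) (t 0) sc tc n (j:ℕ) (![α,β,γ] i)) l e) := by
    ext l e
    simp only [Pmat, Matrix.of_apply]
    exact op_eval_F s t sc tc hs htt htc n (e:ℕ) hn (![α,β,γ] l)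
  rw [hP, Matrix.det_mul_row (fun e : Fin 3 => (-1:ℝ)^(n+(e:ℕ)))]
  congr 1
  rw [Fin.prod_univ_three, ← pow_add, ← pow_add]
  congr 1
  simp
  omega

end Main

end CHaux


/-- Corollary 6: if `s_i = s` and `t_i = t` for `i ≥ 1` with `t > 0`, then for `n ≥ 1`
and real `α, β, γ`,
`det(αβγ m_{i+j} + (αβ+βγ+γα) m_{i+j+1} + (α+β+γ) m_{i+j+2} + m_{i+j+3})·(β-α)(γ-α)(γ-β)
  = det(F_j(x_i))_{i,j=0}^{2} · det(m_{i+j})_{i,j=0}^{n-1}`, where `(x₀,x₁,x₂) = (α,β,γ)`. -/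
theorem hankel_four_term_moments_chebyshev (s t : ℕ → ℝ) (ht : ∀ n, t n ≠ 0)
    (sc tc : ℝ) (htc : 0 < tc)
    (hs : ∀ i, 1 ≤ i → s i = sc) (htt : ∀ i, 1 ≤ i → t i = tc)
    (n : ℕ) (hn : 0 < n) (α β γ : ℝ) :
    Matrix.det (Matrix.of fun i j : Fin n =>
        α * β * γ * motzkinGF s t ((i : ℕ) + (j : ℕ)) 0
          + (α * β + β * γ + γ * α) * motzkinGF s t ((i : ℕ) + (j : ℕ) + 1) 0
          + (α + β + γ) * motzkinGF s t ((i : ℕ) + (j : ℕ) + 2) 0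
          + motzkinGF s t ((i : ℕ) + (j : ℕ) + 3) 0)
      * ((β - α) * (γ - α) * (γ - β))
      = Matrix.det (Matrix.of fun i j : Fin 3 =>
          Fcheb (s 0) (t 0) sc tc n (j : ℕ) (![α, β, γ] i))
        * Matrix.det (Matrix.of fun i j : Fin n =>
            motzkinGF s t ((i : ℕ) + (j : ℕ)) 0) := by
  classical
  have hQne : (CHaux.Qmat s t n).det ≠ 0 := by
    rw [CHaux.Qmat_det s t n]
    refine Finset.prod_ne_zero_iff.mpr (fun e _ => ?_)
    exact Finset.prod_ne_zero_iff.mpr (fun j _ => ht j)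
  set Lm := Matrix.of fun i j : Fin n =>
        α * β * γ * motzkinGF s t ((i : ℕ) + (j : ℕ)) 0
          + (α * β + β * γ + γ * α) * motzkinGF s t ((i : ℕ) + (j : ℕ) + 1) 0
          + (α + β + γ) * motzkinGF s t ((i : ℕ) + (j : ℕ) + 2) 0
          + motzkinGF s t ((i : ℕ) + (j : ℕ) + 3) 0 with hLm
  set Fm := Matrix.of fun i j : Fin 3 =>
          Fcheb (s 0) (t 0) sc tc n (j : ℕ) (![α, β, γ] i) with hFm
  set Hm := Matrix.of fun i j : Fin n =>
            motzkinGF s t ((i : ℕ) + (j : ℕ)) 0 with hHm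
  have e1 : Lm.det * (CHaux.Qmat s t n).det
      = (CHaux.HHm s t n).det * (CHaux.Wind s t n α β γ).det := by
    calc Lm.det * (CHaux.Qmat s t n).det
        = (Matrix.fromBlocks Lm 0
            (Matrix.of fun (e' : Fin 3) (j : Fin n) =>
              (CHaux.HHm s t n * CHaux.Wind s t n α β γ) (Sum.inr e') (Sum.inl j))
            (CHaux.Qmat s t n)).det := (Matrix.det_fromBlocks_zero₁₂ _ _ _).symm
      _ = (CHaux.HHm s t n * CHaux.Wind s t n α β γ).det := by
          rw [hLm, ← CHaux.HHW_blocks s t n α β γ]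
      _ = (CHaux.HHm s t n).det * (CHaux.Wind s t n α β γ).det := Matrix.det_mul _ _
  have e2 : (CHaux.HHm s t n).det = Hm.det * (CHaux.Qmat s t n).det := by
    rw [CHaux.HH_det s t n, CHaux.Qmat_det s t n, hHm, CHaux.detH s t n]
  have e3 : (CHaux.Wind s t n α β γ).det = (-1:ℝ)^n * (CHaux.Wdg s t n α β γ).det := by
    rw [CHaux.Wind_eq s t n α β γ, Matrix.det_permute, CHaux.tau_sign n hn]
    norm_num
  have e5 := CHaux.Pmat_det s t sc tc n α β γ hs htt htc hn
  rw [← hFm] at e5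
  have e4 := CHaux.detWdg s t n α β γ
  have h33 : (-1:ℝ)^(3*n+3) = -((-1:ℝ)^n) := by
    rw [show 3*n+3 = n + 2*(n+1) + 1 from by ring, pow_add, pow_add, pow_mul]
    norm_num
  have hkk : (-1:ℝ)^n * (-1:ℝ)^n = 1 := by
    rw [← pow_add, ← two_mul, pow_mul]
    norm_num
  have e6 : Lm.det = Hm.det * ((-1:ℝ)^n * (CHaux.Wdg s t n α β γ).det) := by
    apply mul_right_cancel₀ hQne
    calc Lm.det * (CHaux.Qmat s t n).det
        = (CHaux.HHm s t n).det * (CHaux.Wind s t n α β γ).det := e1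
      _ = (Hm.det * (CHaux.Qmat s t n).det) * ((-1:ℝ)^n * (CHaux.Wdg s t n α β γ).det) := by
          rw [e2, e3]
      _ = Hm.det * ((-1:ℝ)^n * (CHaux.Wdg s t n α β γ).det) * (CHaux.Qmat s t n).det := by
          ring
  have e7 : (CHaux.Wdg s t n α β γ).det * ((β-α)*(γ-α)*(γ-β)) = (-1:ℝ)^n * Fm.det := by
    have h := e4
    rw [e5, h33] at h
    linear_combination -h
  calc Lm.det * ((β - α) * (γ - α) * (γ - β))
      = Hm.det * ((-1:ℝ)^n * (CHaux.Wdg s t n α β γ).det) * ((β - α) * (γ - α) * (γ - β)) := by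
        rw [e6]
    _ = Hm.det * ((-1:ℝ)^n * ((CHaux.Wdg s t n α β γ).det * ((β - α) * (γ - α) * (γ - β)))) := by
        ring
    _ = Hm.det * ((-1:ℝ)^n * ((-1:ℝ)^n * Fm.det)) := by rw [e7]
    _ = ((-1:ℝ)^n * (-1:ℝ)^n) * (Fm.det * Hm.det) := by ring
    _ = Fm.det * Hm.det := by rw [hkk, one_mul]
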